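/- Let J ∈ B(H) be an anti self-adjoint unitary operator on H = ℓ²(ℕ, ℍ), m ∈ 𝕊, and let T ∈ B(H) satisfy TJ = JT, with restriction T_+ := T|_{H_+^{Jm}} : H_+^{Jm} → H_+^{Jm}. Then T is a compact operator on H if and only if T_+ is a compact operator on the complex Hilbert space H_+^{Jm}. -/

import Mathlib

noncomputable section

open Quaternion Filter Topology

/-- The division ring `ℍ` of real quaternions. -/
abbrev Hq := Quaternion ℝ

/-- The quaternionic Hilbert space `H = ℓ²(ℕ, ℍ)`. -/
abbrev Hsp := lp (fun _ : ℕ => Hq) 2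

/-- Right scalar multiplication `x ↦ x · q` on `ℓ²(ℕ, ℍ)` (coordinatewise right
multiplication by the quaternion `q`). -/
def rsmul (q : Hq) (x : Hsp) : Hsp := MulOpposite.op q • x

/-- The quaternionic inner product `⟨x, y⟩ = ∑ₙ x̄ₙ yₙ`. -/
def qinner (x y : Hsp) : Hq := ∑' n, star (x n) * y n

/-- The set `𝕊` of unit imaginary quaternions. -/
def QS : Set Hq := {q | star q = -q ∧ ‖q‖ = 1}

/-- The slice complex plane `ℂ_m = {α + mβ : α, β ∈ ℝ}`. -/
def sliceC (m : Hq) : Set Hq := {q | ∃ α β : ℝ, q = (α : Hq) + m * (β : Hq)}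

/-- The closed upper half slice plane `ℂ_m⁺ = {α + mβ : α ∈ ℝ, β ≥ 0}`. -/
def sliceCplus (m : Hq) : Set Hq :=
  {q | ∃ α β : ℝ, 0 ≤ β ∧ q = (α : Hq) + m * (β : Hq)}

/-- `T : H → H` is a bounded right linear operator, i.e. `T ∈ B(H)`. -/
def IsBoundedRightLinear (T : Hsp → Hsp) : Prop :=
  (∀ x y, T (x + y) = T x + T y) ∧ (∀ q x, T (rsmul q x) = rsmul q (T x)) ∧
    ∃ M : ℝ, ∀ x, ‖T x‖ ≤ M * ‖x‖

/-- `S` is the adjoint of the (bounded) operator `T`: `⟨y, Tx⟩ = ⟨Sy, x⟩` for all `x, y`. -/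
def AdjointOf (T S : Hsp → Hsp) : Prop := ∀ x y, qinner y (T x) = qinner (S y) x

/-- `T` is anti self-adjoint: `T* = -T`. -/
def IsAntiSelfAdjoint (T : Hsp → Hsp) : Prop := AdjointOf T (fun x => -(T x))

/-- `T` is unitary: `T*T = TT* = I`. -/
def IsUnitaryOp (T : Hsp → Hsp) : Prop :=
  ∃ S, AdjointOf T S ∧ (∀ x, S (T x) = x) ∧ (∀ x, T (S x) = x)

/-- The slice Hilbert space `H₊^{Jm} = {u ∈ H : Ju = um}`. -/
def Hplus (J : Hsp → Hsp) (m : Hq) : Set Hsp := {u | J u = rsmul m u}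

/-- `H₋^{Jm} = {u ∈ H : Ju = -um}`. -/
def Hminus (J : Hsp → Hsp) (m : Hq) : Set Hsp := {u | J u = -(rsmul m u)}

/-- `e` is an orthonormal basis of the (closed subspace given by the) set `S`:
each `e r` lies in `S`, the `e r` are orthonormal, and every `x ∈ S` expands as
`x = ∑ᵣ (e r) ⟨e r, x⟩`. Taking `S = Set.univ` gives orthonormal bases of `H`. -/
def IsONBasisOn (S : Set Hsp) (e : ℕ → Hsp) : Prop :=
  (∀ r, e r ∈ S) ∧ (∀ r s, qinner (e r) (e s) = if r = s then 1 else 0) ∧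
    ∀ x ∈ S, HasSum (fun r => rsmul (qinner (e r) x) (e r)) x

/-- A (possibly unbounded) operator in `H`: a domain together with an assignment of
values (only the values on the domain are relevant). -/
structure QOp where
  dom : Set Hsp
  app : Hsp → Hsp

/-- The operator `T` is right linear: its domain is a right `ℍ`-submodule and `T`
is additive and right `ℍ`-homogeneous on it. -/
def QOp.IsRightLinear (T : QOp) : Prop :=
  (0 ∈ T.dom) ∧
  (∀ x ∈ T.dom, ∀ y ∈ T.dom, x + y ∈ T.dom ∧ T.app (x + y) = T.app x + T.app y) ∧
  (∀ x ∈ T.dom, ∀ q : Hq, rsmul q x ∈ T.dom ∧ T.app (rsmul q x) = rsmul q (T.app x))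

/-- `T` is densely defined. -/
def QOp.IsDenselyDefined (T : QOp) : Prop := Dense T.dom

/-- `T` is a closed operator: its graph is closed in `H × H`. -/
def QOp.IsClosedOp (T : QOp) : Prop :=
  IsClosed {p : Hsp × Hsp | p.1 ∈ T.dom ∧ p.2 = T.app p.1}

/-- `S` is the adjoint `T*` of `T`: the domain of `S` is
`{y : x ↦ ⟨y, Tx⟩ is continuous on D(T)}` and `⟨y, Tx⟩ = ⟨Sy, x⟩` there. -/
def QOp.IsAdjointOf (T S : QOp) : Prop :=
  S.dom = {y | ContinuousOn (fun x => qinner y (T.app x)) T.dom} ∧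
  ∀ y ∈ S.dom, ∀ x ∈ T.dom, qinner y (T.app x) = qinner (S.app y) x

/-- Composition `S ∘ T` of partial operators, with the natural domain. -/
def QOp.comp (S T : QOp) : QOp :=
  ⟨{x ∈ T.dom | T.app x ∈ S.dom}, fun x => S.app (T.app x)⟩

/-- Equality of partial operators: equal domains and equal values on the domain. -/
def QOp.Eq (A B : QOp) : Prop := A.dom = B.dom ∧ ∀ x ∈ A.dom, A.app x = B.app x

/-- `T` is normal: `T*T = TT*` (including equality of the domains). -/
def QOp.IsNormal (T : QOp) : Prop :=
  ∃ S : QOp, T.IsAdjointOf S ∧ QOp.Eq (S.comp T) (T.comp S)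

/-- `T` is compact (as an operator on the subspace `S` of `H`): the image of the
closed unit ball of `S` is relatively compact. -/
def IsCompactOn (T : Hsp → Hsp) (S : Set Hsp) : Prop :=
  IsCompact (closure (T '' (Metric.closedBall 0 1 ∩ S)))

/-- `T` has squared Hilbert–Schmidt norm `v` on the subspace `S`:
`∑ᵣ ‖T eᵣ‖² = v` for some orthonormal basis `e` of `S`. -/
def HasHSNormSqOn (T : Hsp → Hsp) (S : Set Hsp) (v : ℝ) : Prop :=
  ∃ e : ℕ → Hsp, IsONBasisOn S e ∧ HasSum (fun r => ‖T (e r)‖ ^ 2) v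

/-- `T` is diagonal: there are an orthonormal basis `{φᵣ}` of `H` contained in `D(T)`
and quaternions `qᵣ` with `Tφᵣ = φᵣ qᵣ`. -/
def QOp.IsDiagonal (T : QOp) : Prop :=
  ∃ e : ℕ → Hsp, IsONBasisOn Set.univ e ∧ (∀ r, e r ∈ T.dom) ∧
    ∃ q : ℕ → Hq, ∀ r, T.app (e r) = rsmul (q r) (e r)

/-- The operator `Δ_q(N) = N² - N(q + q̄) + I|q|²` for a bounded operator `N`. -/
def sphDeltaB (N : Hsp → Hsp) (q : Hq) : Hsp → Hsp :=
  fun x => N (N x) - rsmul (q + star q) (N x) + rsmul ((normSq q : ℝ) : Hq) x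

/-- `q` lies in the spherical resolvent of the bounded operator `N`. -/
def inSphResolventB (N : Hsp → Hsp) (q : Hq) : Prop :=
  (∀ x, sphDeltaB N q x = 0 → x = 0) ∧
  Dense (Set.range (sphDeltaB N q)) ∧
  ∃ M : ℝ, ∀ x, ‖x‖ ≤ M * ‖sphDeltaB N q x‖

/-- The spherical spectrum of a bounded operator. -/
def sphSpectrumB (N : Hsp → Hsp) : Set Hq := {q | ¬ inSphResolventB N q}

/-- The domain `D(N²)` of the square of a partial operator. -/
def QOp.sqDom (N : QOp) : Set Hsp := {x ∈ N.dom | N.app x ∈ N.dom}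

/-- The map underlying `Δ_q(N) = N² - N(q + q̄) + I|q|²`, defined on `D(N²)`. -/
def sphDeltaU (N : QOp) (q : Hq) : Hsp → Hsp :=
  fun x => N.app (N.app x) - rsmul (q + star q) (N.app x) + rsmul ((normSq q : ℝ) : Hq) x

/-- `q` lies in the spherical resolvent of the operator `N ∈ C(H)`. -/
def inSphResolventU (N : QOp) (q : Hq) : Prop :=
  (∀ x ∈ N.sqDom, sphDeltaU N q x = 0 → x = 0) ∧
  Dense (sphDeltaU N q '' N.sqDom) ∧
  ∃ M : ℝ, ∀ x ∈ N.sqDom, ‖x‖ ≤ M * ‖sphDeltaU N q x‖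

/-- The spherical spectrum of `N ∈ C(H)`. -/
def sphSpectrumU (N : QOp) : Set Hq := {q | ¬ inSphResolventU N q}

/-- The circularization `Ω_K = {α + jβ : α + mβ ∈ K, j ∈ 𝕊}` of `K ⊆ ℂ_m`. -/
def circ (m : Hq) (K : Set Hq) : Set Hq :=
  {p | ∃ α β : ℝ, ∃ j ∈ QS, ((α : Hq) + m * (β : Hq) ∈ K) ∧ p = (α : Hq) + j * (β : Hq)}


/-! ### Auxiliary lemmas -/

lemma aux_rpow_two (a : ℝ) : a ^ (2:ℝ) = a ^ 2 := by
  rw [show (2:ℝ) = ((2:ℕ):ℝ) by norm_num, Real.rpow_natCast]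

lemma aux_sq_summable (x : Hsp) : Summable (fun n => ‖x n‖ ^ (2:ℝ)) :=
  (lp.memℓp x).summable (by norm_num)

lemma aux_mul_summable (x y : Hsp) : Summable (fun n => star (x n) * y n) := by
  apply Summable.of_norm
  apply Summable.of_nonneg_of_le (fun n => norm_nonneg _)
    (fun n => ?_) (((aux_sq_summable x).add (aux_sq_summable y)).mul_left (1/2))
  rw [norm_mul, norm_star, aux_rpow_two, aux_rpow_two]
  nlinarith [sq_nonneg (‖x n‖ - ‖y n‖), norm_nonneg (x n), norm_nonneg (y n)]

lemma aux_qinner_self (x : Hsp) : qinner x x = ((‖x‖^2 : ℝ) : Hq) := by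
  have hn : ‖x‖ ^ (2:ℝ) = ∑' n, ‖x n‖ ^ (2:ℝ) := by
    simpa using lp.norm_rpow_eq_tsum (p := 2) (by norm_num) x
  have hterm : ∀ n, star (x n) * x n = ((‖x n‖ ^ (2:ℝ) : ℝ) : Hq) := by
    intro n
    rw [Quaternion.star_mul_self, normSq_eq_norm_mul_self, aux_rpow_two]
    push_cast; rw [sq]
  unfold qinner
  calc ∑' n, star (x n) * x n = ∑' n, ((‖x n‖ ^ (2:ℝ) : ℝ) : Hq) := by
        simp_rw [hterm]
    _ = ((∑' n, ‖x n‖ ^ (2:ℝ) : ℝ) : Hq) :=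
        (Summable.map_tsum (aux_sq_summable x) (algebraMap ℝ Hq).toAddMonoidHom
          Quaternion.continuous_coe).symm
    _ = ((‖x‖^2 : ℝ) : Hq) := by rw [← hn, aux_rpow_two]

lemma aux_qinner_sub_left (a b x : Hsp) :
    qinner (a - b) x = qinner a x - qinner b x := by
  unfold qinner
  rw [← Summable.tsum_sub (aux_mul_summable a x) (aux_mul_summable b x)]
  congr 1; funext n
  have h : (a - b : Hsp) n = a n - b n := by rw [lp.coeFn_sub]; rfl
  rw [h, star_sub, sub_mul]

lemma aux_qinner_ext (a b : Hsp) (h : ∀ x, qinner a x = qinner b x) : a = b := by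
  have h1 : qinner (a - b) (a - b) = 0 := by
    rw [aux_qinner_sub_left, h, sub_self]
  rw [aux_qinner_self] at h1
  rw [show (0:Hq) = ((0:ℝ):Hq) by simp] at h1
  have h2 := Quaternion.coe_injective h1
  have h3 : ‖a - b‖ = 0 := by nlinarith [norm_nonneg (a - b)]
  exact sub_eq_zero.mp (norm_eq_zero.mp h3)

lemma aux_mm (m : Hq) (hm : m ∈ QS) : m * m = -1 := by
  obtain ⟨hs, hn⟩ := hm
  have h1 : m * m = -(m * star m) := by rw [hs]; noncomm_ring
  rw [h1, Quaternion.self_mul_star, normSq_eq_norm_mul_self, hn]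
  norm_num

lemma aux_exists_anticommute (m : Hq) (hm : m ∈ QS) :
    ∃ j : Hq, ‖j‖ = 1 ∧ m * j = -(j * m) := by
  have hmm := aux_mm m hm
  have hanti : ∀ p : Hq, m * (m * p - p * m) = -((m * p - p * m) * m) := by
    intro p
    have h : m * (m * p - p * m) + (m * p - p * m) * m = (m*m) * p - p * (m*m) := by
      noncomm_ring
    rw [hmm] at h
    have h2 : m * (m * p - p * m) + (m * p - p * m) * m = 0 := by
      rw [h]; noncomm_ring
    linear_combination (norm := noncomm_ring) h2
  have hne : m ≠ 0 := by
    intro h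
    have := hm.2
    rw [h, norm_zero] at this
    exact one_ne_zero this.symm
  obtain ⟨p, hp⟩ : ∃ p : Hq, m * p - p * m ≠ 0 := by
    by_contra h
    push_neg at h
    obtain ⟨i, hi⟩ : ∃ i : Hq, i = ⟨0,1,0,0⟩ := ⟨_, rfl⟩
    obtain ⟨k, hk⟩ : ∃ k : Hq, k = ⟨0,0,1,0⟩ := ⟨_, rfl⟩
    have hI := h i
    have hJ := h k
    rw [sub_eq_zero] at hI hJ
    rw [Quaternion.ext_iff] at hI hJ
    simp only [Quaternion.re_mul, Quaternion.imI_mul, Quaternion.imJ_mul,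
      Quaternion.imK_mul] at hI hJ
    simp only [hi, hk] at hI hJ
    apply hne
    ext
    · have := congrArg QuaternionAlgebra.re hm.1
      simp at this ⊢; linarith
    · obtain ⟨h1, h2, h3, h4⟩ := hJ; simp at h1 h2 h3 h4 ⊢; linarith
    · obtain ⟨h1, h2, h3, h4⟩ := hI; simp at h1 h2 h3 h4 ⊢; linarith
    · obtain ⟨h1, h2, h3, h4⟩ := hI; simp at h1 h2 h3 h4 ⊢; linarith
  set c := m * p - p * m with hc
  have hcn : ‖c‖ ≠ 0 := norm_ne_zero_iff.mpr hp
  refine ⟨((‖c‖⁻¹ : ℝ) : Hq) * c, ?_, ?_⟩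
  · rw [norm_mul, Quaternion.norm_coe, norm_inv, norm_norm]
    field_simp
  · have key : m * (((‖c‖⁻¹ : ℝ) : Hq) * c) = ((‖c‖⁻¹ : ℝ) : Hq) * (m * c) := by
      rw [← mul_assoc, ← Quaternion.coe_commutes, mul_assoc]
    rw [key, hanti p, mul_neg, mul_assoc]

lemma aux_rsmul_rsmul (q p : Hq) (x : Hsp) : rsmul q (rsmul p x) = rsmul (p * q) x := by
  simp [rsmul, smul_smul]

lemma aux_rsmul_add (q : Hq) (x y : Hsp) : rsmul q (x + y) = rsmul q x + rsmul q y :=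
  smul_add _ _ _

lemma aux_rsmul_sub (q : Hq) (x y : Hsp) : rsmul q (x - y) = rsmul q x - rsmul q y :=
  smul_sub _ _ _

lemma aux_rsmul_neg (q : Hq) (x : Hsp) : rsmul q (-x) = -(rsmul q x) :=
  smul_neg _ _

lemma aux_rsmul_neg_left (q : Hq) (x : Hsp) : rsmul (-q) x = -(rsmul q x) := by
  simp [rsmul]

lemma aux_rsmul_one (x : Hsp) : rsmul 1 x = x := by simp [rsmul]

lemma aux_rsmul_negone (x : Hsp) : rsmul (-1) x = -x := by simp [rsmul]

lemma aux_norm_rsmul_le (q : Hq) (x : Hsp) : ‖rsmul q x‖ ≤ ‖q‖ * ‖x‖ := by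
  simpa [rsmul, MulOpposite.norm_op] using lp.norm_const_smul_le (𝕜 := Hqᵐᵒᵖ) (by norm_num : (2:ENNReal) ≠ 0)
    (MulOpposite.op q) x

open Pointwise in
set_option maxHeartbeats 1000000 in
set_option synthInstance.maxHeartbeats 400000 in
/-- For `T ∈ B(H)` commuting with `J`, `T` is compact on `H` if and
only if the restriction `T₊ = T|_{H₊^{Jm}}` is compact on `H₊^{Jm}`. -/
theorem compact_iff_slice_restriction_compact (J : Hsp → Hsp) (m : Hq) (hm : m ∈ QS)
    (hJlin : IsBoundedRightLinear J) (hJa : IsAntiSelfAdjoint J) (hJu : IsUnitaryOp J)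
    (T : Hsp → Hsp) (hT : IsBoundedRightLinear T)
    (hcomm : ∀ x, T (J x) = J (T x)) :
    IsCompactOn T Set.univ ↔ IsCompactOn T (Hplus J m) := by
  constructor
  · intro h
    refine IsCompact.of_isClosed_subset h isClosed_closure
      (closure_mono (Set.image_mono (fun x hx => ⟨hx.1, trivial⟩)))
  · intro hK
    obtain ⟨hJadd, hJsmul, -⟩ := hJlin
    obtain ⟨S, hSadj, hSJ, hJS⟩ := hJu
    obtain ⟨hTadd, hTsmul, -⟩ := hT
    -- basic additive facts about J
    have hJ0 : J 0 = 0 := by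
      have h := hJadd 0 0
      rw [add_zero] at h
      exact (left_eq_add.mp h)
    have hJneg : ∀ x, J (-x) = -(J x) := by
      intro x
      have h := hJadd x (-x)
      rw [add_neg_cancel, hJ0] at h
      exact (neg_eq_of_add_eq_zero_right h.symm).symm
    have hJsub : ∀ x y, J (x - y) = J x - J y := by
      intro x y
      rw [sub_eq_add_neg, hJadd, hJneg, sub_eq_add_neg]
    -- J ∘ J = -1 and J is isometric
    have hJJ : ∀ y, J (J y) = -y := by
      intro y
      have h1 : ∀ x, qinner (-(J (J y))) x = qinner y x := by
        intro x
        calc qinner (-(J (J y))) x = qinner (J y) (J x) := (hJa x (J y)).symm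
          _ = qinner (S (J y)) x := hSadj x (J y)
          _ = qinner y x := by rw [hSJ]
      have h2 := aux_qinner_ext _ _ h1
      exact neg_eq_iff_eq_neg.mp h2
    have hJnorm : ∀ x, ‖J x‖ = ‖x‖ := by
      intro x
      have h1 : qinner (J x) (J x) = qinner x x := by
        calc qinner (J x) (J x) = qinner (S (J x)) x := hSadj x (J x)
          _ = qinner x x := by rw [hSJ]
      rw [aux_qinner_self, aux_qinner_self] at h1
      have h2 := Quaternion.coe_injective h1
      calc ‖J x‖ = Real.sqrt (‖J x‖ ^ 2) := (Real.sqrt_sq (norm_nonneg _)).symm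
        _ = Real.sqrt (‖x‖ ^ 2) := by rw [h2]
        _ = ‖x‖ := Real.sqrt_sq (norm_nonneg _)
    -- the anticommuting unit quaternion
    obtain ⟨j, hjn, hjanti⟩ := aux_exists_anticommute m hm
    have hj0 : j ≠ 0 := by
      intro h; rw [h, norm_zero] at hjn; exact one_ne_zero hjn.symm
    have hjanti' : j * m = -(m * j) := by rw [hjanti, neg_neg]
    have hjinv_anti : m * j⁻¹ = -(j⁻¹ * m) := by
      calc m * j⁻¹ = j⁻¹ * (j * (m * j⁻¹)) := by
            rw [← mul_assoc, inv_mul_cancel₀ hj0, one_mul]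
        _ = j⁻¹ * ((j * m) * j⁻¹) := by rw [mul_assoc j m j⁻¹]
        _ = j⁻¹ * (-(m * j) * j⁻¹) := by rw [← hjanti']
        _ = -(j⁻¹ * (m * (j * j⁻¹))) := by
            rw [neg_mul, mul_neg, mul_assoc m j j⁻¹]
        _ = -(j⁻¹ * m) := by rw [mul_inv_cancel₀ hj0, mul_one]
    have hjinvn : ‖j⁻¹‖ = 1 := by rw [norm_inv, hjn]; norm_num
    -- the half scalar
    set h2q : Hq := ((2⁻¹ : ℝ) : Hq) with hh2
    have hh2n : ‖h2q‖ = 2⁻¹ := by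
      rw [hh2, Quaternion.norm_coe]
      simp [Real.norm_eq_abs]
    have hh2add : ∀ y : Hsp, rsmul h2q y + rsmul h2q y = y := by
      intro y
      rw [rsmul, ← add_smul, ← MulOpposite.op_add]
      have : h2q + h2q = 1 := by
        rw [hh2, ← Quaternion.coe_add]
        norm_num
      rw [this, MulOpposite.op_one, one_smul]
    have hcomm2 : h2q * m = m * h2q := Quaternion.coe_commutes _ _
    have hmm := aux_mm m hm
    -- the compact sets
    set K := closure (T '' (Metric.closedBall 0 1 ∩ Hplus J m)) with hKdef
    have hlip : Continuous (rsmul j) := by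
      have hd : ∀ y z : Hsp, dist (rsmul j y) (rsmul j z) ≤ (1:NNReal) * dist y z := by
        intro y z
        rw [dist_eq_norm, dist_eq_norm]
        calc ‖rsmul j y - rsmul j z‖ = ‖rsmul j (y - z)‖ := by rw [aux_rsmul_sub]
          _ ≤ ‖j‖ * ‖y - z‖ := aux_norm_rsmul_le _ _
          _ = (1:NNReal) * ‖y - z‖ := by rw [hjn]; norm_num
      exact (LipschitzWith.of_dist_le_mul hd).continuous
    have hL : IsCompact ((rsmul j) '' K) := hK.image hlip
    have hC : IsCompact (K + (rsmul j) '' K) := hK.add hL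
    refine IsCompact.of_isClosed_subset hC isClosed_closure (closure_minimal ?_ hC.isClosed)
    rintro y ⟨x, ⟨hx1, -⟩, rfl⟩
    rw [Metric.mem_closedBall, dist_zero_right] at hx1
    set P := rsmul h2q (x - rsmul m (J x)) with hPdef
    set Q := rsmul h2q (x + rsmul m (J x)) with hQdef
    have hPQ : P + Q = x := by
      calc P + Q = rsmul h2q ((x - rsmul m (J x)) + (x + rsmul m (J x))) := by
            rw [aux_rsmul_add]
        _ = rsmul h2q (x + x) := by congr 1; abel
        _ = rsmul h2q x + rsmul h2q x := by rw [aux_rsmul_add]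
        _ = x := hh2add x
    have hmx : rsmul m (x - rsmul m (J x)) = rsmul m x + J x := by
      rw [aux_rsmul_sub, aux_rsmul_rsmul, hmm, aux_rsmul_negone]
      abel
    have hmx' : rsmul m (x + rsmul m (J x)) = rsmul m x - J x := by
      rw [aux_rsmul_add, aux_rsmul_rsmul, hmm, aux_rsmul_negone]
      abel
    have hPplus : P ∈ Hplus J m := by
      show J P = rsmul m P
      have l1 : J P = rsmul h2q (J x + rsmul m x) := by
        rw [hPdef, hJsmul, hJsub, hJsmul, hJJ, aux_rsmul_neg]
        congr 1; abel
      have l2 : rsmul m P = rsmul h2q (J x + rsmul m x) := by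
        calc rsmul m P = rsmul (h2q * m) (x - rsmul m (J x)) := by
              rw [hPdef, aux_rsmul_rsmul]
          _ = rsmul (m * h2q) (x - rsmul m (J x)) := by rw [hcomm2]
          _ = rsmul h2q (rsmul m (x - rsmul m (J x))) := (aux_rsmul_rsmul _ _ _).symm
          _ = rsmul h2q (J x + rsmul m x) := by rw [hmx, add_comm (rsmul m x) (J x)]
      rw [l1, l2]
    have hQminus : J Q = -(rsmul m Q) := by
      have l1 : J Q = rsmul h2q (J x - rsmul m x) := by
        rw [hQdef, hJsmul, hJadd, hJsmul, hJJ, aux_rsmul_neg]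
        congr 1
      have l2 : rsmul m Q = rsmul h2q (rsmul m x - J x) := by
        calc rsmul m Q = rsmul (h2q * m) (x + rsmul m (J x)) := by
              rw [hQdef, aux_rsmul_rsmul]
          _ = rsmul (m * h2q) (x + rsmul m (J x)) := by rw [hcomm2]
          _ = rsmul h2q (rsmul m (x + rsmul m (J x))) := (aux_rsmul_rsmul _ _ _).symm
          _ = rsmul h2q (rsmul m x - J x) := by rw [hmx']
      rw [l1, l2, ← aux_rsmul_neg]
      congr 1; abel
    have hPnorm : ‖P‖ ≤ 1 := by
      have h1 : ‖rsmul m (J x)‖ ≤ 1 := by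
        calc ‖rsmul m (J x)‖ ≤ ‖m‖ * ‖J x‖ := aux_norm_rsmul_le _ _
          _ = ‖x‖ := by rw [hm.2, hJnorm, one_mul]
          _ ≤ 1 := hx1
      calc ‖P‖ ≤ ‖h2q‖ * ‖x - rsmul m (J x)‖ := aux_norm_rsmul_le _ _
        _ ≤ 2⁻¹ * (‖x‖ + ‖rsmul m (J x)‖) := by
            rw [hh2n]
            have := norm_sub_le x (rsmul m (J x))
            nlinarith [norm_nonneg (x - rsmul m (J x))]
        _ ≤ 1 := by nlinarith
    have hQnorm : ‖Q‖ ≤ 1 := by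
      have h1 : ‖rsmul m (J x)‖ ≤ 1 := by
        calc ‖rsmul m (J x)‖ ≤ ‖m‖ * ‖J x‖ := aux_norm_rsmul_le _ _
          _ = ‖x‖ := by rw [hm.2, hJnorm, one_mul]
          _ ≤ 1 := hx1
      calc ‖Q‖ ≤ ‖h2q‖ * ‖x + rsmul m (J x)‖ := aux_norm_rsmul_le _ _
        _ ≤ 2⁻¹ * (‖x‖ + ‖rsmul m (J x)‖) := by
            rw [hh2n]
            have := norm_add_le x (rsmul m (J x))
            nlinarith [norm_nonneg (x + rsmul m (J x))]
        _ ≤ 1 := by nlinarith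
    set u := rsmul j⁻¹ Q with hudef
    have huplus : u ∈ Hplus J m := by
      show J u = rsmul m u
      calc J u = rsmul j⁻¹ (J Q) := by rw [hudef, hJsmul]
        _ = rsmul j⁻¹ (-(rsmul m Q)) := by rw [hQminus]
        _ = -(rsmul (m * j⁻¹) Q) := by rw [aux_rsmul_neg, aux_rsmul_rsmul]
        _ = rsmul (j⁻¹ * m) Q := by
            rw [hjinv_anti, aux_rsmul_neg_left, neg_neg]
        _ = rsmul m u := (aux_rsmul_rsmul m j⁻¹ Q).symm
    have hunorm : ‖u‖ ≤ 1 := by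
      calc ‖u‖ ≤ ‖j⁻¹‖ * ‖Q‖ := aux_norm_rsmul_le _ _
        _ ≤ 1 := by rw [hjinvn, one_mul]; exact hQnorm
    have hQju : rsmul j u = Q := by
      rw [hudef, aux_rsmul_rsmul, inv_mul_cancel₀ hj0, aux_rsmul_one]
    have hTx : T x = T P + rsmul j (T u) := by
      conv_lhs => rw [← hPQ]
      rw [hTadd, ← hQju, hTsmul, hTsmul]
    rw [hTx]
    refine Set.add_mem_add ?_ ?_
    · exact subset_closure ⟨P, ⟨by rwa [Metric.mem_closedBall, dist_zero_right], hPplus⟩, rfl⟩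
    · exact ⟨T u, subset_closure ⟨u, ⟨by rwa [Metric.mem_closedBall, dist_zero_right], huplus⟩, rfl⟩, rfl⟩
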